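/- Let G be a finite connected simple graph with minimum degree at least 2 that is not isomorphic to the 4-cycle C₄. Then the fractional domatic number of G is strictly greater than 2. -/

import Mathlib

open SimpleGraph

/-- A set of vertices `D` is dominating in `G` if every vertex not in `D`
has a neighbour in `D`. -/
def Dominating {V : Type*} (G : SimpleGraph V) (D : Finset V) : Prop :=
  ∀ v : V, v ∉ D → ∃ u ∈ D, G.Adj v u

/-- A `(k,s)`-configuration of `G`: a multiset of `k` dominating sets of `G`
such that every vertex belongs to at most `s` of them. -/
def IsConfig {V : Type*} [DecidableEq V] (G : SimpleGraph V)
    (𝒟 : Multiset (Finset V)) (k s : ℕ) : Prop :=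
  Multiset.card 𝒟 = k ∧ (∀ D ∈ 𝒟, Dominating G D) ∧
    ∀ v : V, 𝒟.countP (fun D => v ∈ D) ≤ s

/-- The fractional domatic number of `G`: the supremum (attained as a maximum) of `k/s`
over all natural numbers `k`, `s ≥ 1` such that `G` admits a `(k,s)`-configuration. -/
noncomputable def fracDomatic {V : Type*} [DecidableEq V] (G : SimpleGraph V) : ℝ :=
  sSup {x : ℝ | ∃ k s : ℕ, 0 < s ∧ (∃ 𝒟 : Multiset (Finset V), IsConfig G 𝒟 k s) ∧
    x = (k : ℝ) / (s : ℝ)}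

namespace FDaux
set_option linter.unusedSectionVars false

variable {V : Type*} [Fintype V] [DecidableEq V] {G : SimpleGraph V}

lemma two_nbrs (hdeg : ∀ v : V, 2 ≤ (G.neighborSet v).ncard) (u : V) :
    ∃ w₁ w₂, G.Adj u w₁ ∧ G.Adj u w₂ ∧ w₁ ≠ w₂ := by
  obtain ⟨a, ha, b, hb, hab⟩ :=
    (Set.one_lt_ncard (Set.toFinite _)).mp (lt_of_lt_of_le one_lt_two (hdeg u))
  exact ⟨a, b, ha, hb, hab⟩

lemma nbr_ne (hdeg : ∀ v : V, 2 ≤ (G.neighborSet v).ncard) (u z : V) :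
    ∃ w, G.Adj u w ∧ w ≠ z := by
  obtain ⟨a, b, ha, hb, hab⟩ := two_nbrs hdeg u
  by_cases h : a = z
  · exact ⟨b, hb, by rintro rfl; exact hab h⟩
  · exact ⟨a, ha, h⟩

/-- Independent dominating set (= maximal independent set). -/
def IndDom (G : SimpleGraph V) (B : Finset V) : Prop :=
  (∀ a ∈ B, ∀ b ∈ B, ¬ G.Adj a b) ∧ Dominating G B

lemma exists_indDom (A : Finset V) (hA : ∀ a ∈ A, ∀ b ∈ A, ¬ G.Adj a b) :
    ∃ B : Finset V, IndDom G B ∧ A ⊆ B := by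
  classical
  let s : Finset (Finset V) :=
    Finset.univ.filter (fun B => A ⊆ B ∧ ∀ a ∈ B, ∀ b ∈ B, ¬ G.Adj a b)
  have hAs : A ∈ s := by
    simp only [s, Finset.mem_filter, Finset.mem_univ, true_and]
    exact ⟨Finset.Subset.refl A, hA⟩
  obtain ⟨B, hBs, hmax⟩ := Finset.exists_max_image s Finset.card ⟨A, hAs⟩
  simp only [s, Finset.mem_filter, Finset.mem_univ, true_and] at hBs
  refine ⟨B, ⟨hBs.2, ?_⟩, hBs.1⟩
  intro u hu
  by_contra hno
  push_neg at hno
  have hind : ∀ a ∈ insert u B, ∀ b ∈ insert u B, ¬ G.Adj a b := by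
    intro a ha b hb
    rcases Finset.mem_insert.mp ha with h1 | h1 <;>
      rcases Finset.mem_insert.mp hb with h2 | h2 <;> intro hadj
    · exact G.irrefl (by rwa [h1, h2] at hadj)
    · exact hno b h2 (by rwa [h1] at hadj)
    · exact hno a h1 (by rw [h2] at hadj; exact hadj.symm)
    · exact hBs.2 a h1 b h2 hadj
  have hmem : insert u B ∈ s := by
    simp only [s, Finset.mem_filter, Finset.mem_univ, true_and]
    exact ⟨hBs.1.trans (Finset.subset_insert _ _), hind⟩
  have := hmax _ hmem
  rw [Finset.card_insert_of_notMem hu] at this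
  omega

lemma indDom_mem_not_adj {B : Finset V} (hB : IndDom G B) {a : V} (ha : a ∈ B) {b : V}
    (hab : G.Adj a b) : b ∉ B := fun hb => hB.1 a ha b hb hab

/-- The modified complement `insert x ((Bᶜ).erase v)` is dominating, when `x` is a
neighbour of `v`. -/
lemma dom_modCompl (hdeg : ∀ v : V, 2 ≤ (G.neighborSet v).ncard)
    {B : Finset V} (hB : IndDom G B) {v x : V} (hvx : G.Adj v x) :
    Dominating G (insert x ((Bᶜ).erase v)) := by
  intro u hu
  have hux : u ≠ x := by rintro rfl; exact hu (Finset.mem_insert_self _ _)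
  by_cases huv : u = v
  · exact ⟨x, Finset.mem_insert_self _ _, huv ▸ hvx⟩
  · have huB : u ∈ B := by
      by_contra hB'
      exact hu (Finset.mem_insert_of_mem (Finset.mem_erase.mpr ⟨huv, Finset.mem_compl.mpr hB'⟩))
    obtain ⟨w, hw, hwv⟩ := nbr_ne hdeg u v
    have hwB : w ∉ B := indDom_mem_not_adj hB huB hw
    exact ⟨w, Finset.mem_insert_of_mem
      (Finset.mem_erase.mpr ⟨hwv, Finset.mem_compl.mpr hwB⟩), hw⟩

lemma mem_modCompl {B : Finset V} {v x u : V} :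
    u ∈ insert x ((Bᶜ).erase v) ↔ u = x ∨ (u ≠ v ∧ u ∉ B) := by
  simp [Finset.mem_insert, Finset.mem_erase, Finset.mem_compl]

lemma count4 (p : Finset V → Prop) [DecidablePred p] (D₁ D₂ D₃ D₄ : Finset V) :
    Multiset.countP p ({D₁, D₂, D₃, D₄} : Multiset (Finset V)) =
      (if p D₁ then 1 else 0) + (if p D₂ then 1 else 0) +
      (if p D₃ then 1 else 0) + (if p D₄ then 1 else 0) := by
  show Multiset.countP p (D₁ ::ₘ D₂ ::ₘ D₃ ::ₘ D₄ ::ₘ 0) = _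
  simp only [Multiset.countP_cons, Multiset.countP_zero]
  split_ifs <;> omega

end FDaux

namespace FDaux2
set_option linter.unusedSectionVars false
open FDaux
variable {V : Type*} [Fintype V] [DecidableEq V] {G : SimpleGraph V}

lemma pair_ind (p q : Prop) [Decidable p] [Decidable q] :
    (if p ∨ q then 1 else 0) ≤ (if p then 1 else 0) + (if q then 1 else 0) := by
  by_cases hp : p <;> by_cases hq : q <;> simp [hp, hq]

lemma ind4_le_one {u a b c d : V} (hab : a ≠ b) (hac : a ≠ c) (had : a ≠ d) (hbc : b ≠ c)
    (hbd : b ≠ d) (hcd : c ≠ d) :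
    (if u = a then 1 else 0) + (if u = b then 1 else 0) + (if u = c then 1 else 0) +
      (if u = d then 1 else 0) ≤ 1 := by
  by_cases h1 : u = a
  · subst h1; simp [hab, hac, had]
  by_cases h2 : u = b
  · subst h2; simp [h1, hbc, hbd]
  by_cases h3 : u = c
  · subst h3; simp [h1, h2, hcd]
  by_cases h4 : u = d
  · subst h4; simp [h1, h2, h3]
  · simp [h1, h2, h3, h4]

/-- `v` is good if there is a maximal independent set avoiding `v` and a neighbour of `v`. -/
def Good (G : SimpleGraph V) (v : V) : Prop :=
  ∃ B : Finset V, IndDom G B ∧ v ∉ B ∧ ∃ w, G.Adj v w ∧ w ∉ B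

lemma bad_spec {v : V} (hbad : ¬ Good G v) :
    ∀ B : Finset V, IndDom G B → v ∉ B → ∀ w, G.Adj v w → w ∈ B := by
  intro B hB hvB w hw
  by_contra hwB
  exact hbad ⟨B, hB, hvB, w, hw, hwB⟩

/-- The target: four dominating sets covering each vertex at most twice and `v` at most once. -/
def Slack (G : SimpleGraph V) (v : V) : Prop :=
  ∃ 𝒟 : Multiset (Finset V), Multiset.card 𝒟 = 4 ∧ (∀ D ∈ 𝒟, Dominating G D) ∧
    (∀ u : V, Multiset.countP (fun D => u ∈ D) 𝒟 ≤ 2) ∧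
    Multiset.countP (fun D => v ∈ D) 𝒟 ≤ 1

lemma slack_of_good (hdeg : ∀ v : V, 2 ≤ (G.neighborSet v).ncard) {v : V} (hv : Good G v) :
    Slack G v := by
  classical
  obtain ⟨B, hB, hvB, w, hvw, hwB⟩ := hv
  set C : Finset V := insert w ((Bᶜ).erase v) with hC
  have hdomC : Dominating G C := dom_modCompl hdeg hB hvw
  have hBC : ∀ u, u ∈ B → u ∉ C := by
    intro u hu hC'
    rcases mem_modCompl.mp hC' with rfl | ⟨_, hnB⟩
    · exact hwB hu
    · exact hnB hu
  have hvC : v ∉ C := by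
    intro hv'
    rcases mem_modCompl.mp hv' with rfl | ⟨h, _⟩
    · exact G.irrefl hvw
    · exact h rfl
  refine ⟨{B, C, B, C}, rfl, ?_, ?_, ?_⟩
  · intro D hD
    rcases Multiset.mem_cons.mp hD with rfl | hD
    · exact hB.2
    rcases Multiset.mem_cons.mp hD with rfl | hD
    · exact hdomC
    rcases Multiset.mem_cons.mp hD with rfl | hD
    · exact hB.2
    rw [Multiset.mem_singleton] at hD
    exact hD ▸ hdomC
  · intro u
    rw [count4]
    by_cases h1 : u ∈ B <;> by_cases h2 : u ∈ C
    · exact absurd h2 (hBC u h1)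
    all_goals simp [h1, h2]
  · rw [count4]
    simp [hvB, hvC]

lemma slack_of_good_nbr (hdeg : ∀ v : V, 2 ≤ (G.neighborSet v).ncard) {v x : V}
    (hvx : G.Adj v x) (hx : Good G x) : Slack G v := by
  classical
  obtain ⟨B₂, hB₂, hxB₂, w, hxw, hwB₂⟩ := hx
  obtain ⟨B₁, hB₁, hsub⟩ := exists_indDom {x}
    (by intro a ha b hb; rw [Finset.mem_singleton] at ha hb; subst ha; subst hb; exact G.irrefl)
  have hxB₁ : x ∈ B₁ := hsub (Finset.mem_singleton_self x)
  have hvB₁ : v ∉ B₁ := indDom_mem_not_adj hB₁ hxB₁ hvx.symm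
  set D₁ : Finset V := insert x ((B₁ᶜ).erase v) with hD₁
  set D₂ : Finset V := insert w ((B₂ᶜ).erase x) with hD₂
  have hdomD₁ : Dominating G D₁ := dom_modCompl hdeg hB₁ hvx
  have hdomD₂ : Dominating G D₂ := dom_modCompl hdeg hB₂ hxw
  have hxD₂ : x ∉ D₂ := by
    intro h
    rcases mem_modCompl.mp h with rfl | ⟨h', _⟩
    · exact G.irrefl hxw
    · exact h' rfl
  have hvD₁ : v ∉ D₁ := by
    intro h
    rcases mem_modCompl.mp h with rfl | ⟨h', _⟩
    · exact G.irrefl hvx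
    · exact h' rfl
  have h34 : ∀ u, u ∈ B₂ → u ∉ D₂ := by
    intro u hu h
    rcases mem_modCompl.mp h with rfl | ⟨_, hnB⟩
    · exact hwB₂ hu
    · exact hnB hu
  refine ⟨{B₁, D₁, B₂, D₂}, rfl, ?_, ?_, ?_⟩
  · intro D hD
    rcases Multiset.mem_cons.mp hD with rfl | hD
    · exact hB₁.2
    rcases Multiset.mem_cons.mp hD with rfl | hD
    · exact hdomD₁
    rcases Multiset.mem_cons.mp hD with rfl | hD
    · exact hB₂.2
    rw [Multiset.mem_singleton] at hD
    exact hD ▸ hdomD₂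
  · intro u
    rw [count4]
    by_cases hux : u = x
    · subst hux
      have hxD₁ : u ∈ D₁ := Finset.mem_insert_self _ _
      simp [hxB₁, hxD₁, hxB₂, hxD₂]
    · have h12 : u ∈ B₁ → u ∉ D₁ := by
        intro h1 h2
        rcases mem_modCompl.mp h2 with rfl | ⟨_, h⟩
        · exact hux rfl
        · exact h h1
      have h34' : u ∈ B₂ → u ∉ D₂ := h34 u
      by_cases h1 : u ∈ B₁ <;> by_cases h2 : u ∈ D₁ <;>
        by_cases h3 : u ∈ B₂ <;> by_cases h4 : u ∈ D₂ <;>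
        simp_all
  · rw [count4]
    have hvx' : v ≠ x := G.ne_of_adj hvx
    by_cases h3 : v ∈ B₂ <;> by_cases h4 : v ∈ D₂
    · exact absurd h4 (h34 v h3)
    all_goals simp [hvB₁, hvD₁, h3, h4]

end FDaux2

namespace FDaux2
set_option linter.unusedSectionVars false
open FDaux
variable {V : Type*} [Fintype V] [DecidableEq V] {G : SimpleGraph V}

lemma bad_adj_of_adj {c : V} (hbad : ¬ Good G c) {p q : V} (h1 : G.Adj c p) (h2 : G.Adj c q)
    (hpq : p ≠ q) {z : V} (hz : G.Adj q z) : G.Adj p z := by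
  classical
  have hb := bad_spec hbad
  have hnpq : ¬ G.Adj p q := by
    intro hadj
    obtain ⟨B, hB, hsubB⟩ := exists_indDom {p}
      (by intro a ha b hb'; rw [Finset.mem_singleton] at ha hb'; subst ha; subst hb';
          exact G.irrefl)
    have hpB : p ∈ B := hsubB (Finset.mem_singleton_self p)
    have hcB : c ∉ B := indDom_mem_not_adj hB hpB h1.symm
    exact hB.1 p hpB q (hb B hB hcB q h2) hadj
  by_contra hnpz
  have hzp : z ≠ p := by rintro rfl; exact hnpq hz.symm
  have hind : ∀ a ∈ ({p, z} : Finset V), ∀ b ∈ ({p, z} : Finset V), ¬ G.Adj a b := by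
    intro a ha b hb'
    rcases Finset.mem_insert.mp ha with rfl | ha <;>
      rcases Finset.mem_insert.mp hb' with h' | h'
    · intro h; rw [h'] at h; exact G.irrefl h
    · rw [Finset.mem_singleton] at h'; subst h'; exact hnpz
    · rw [Finset.mem_singleton] at ha; subst ha; rw [h'];
      exact fun h => hnpz h.symm
    · rw [Finset.mem_singleton] at ha h'; subst ha; subst h'; exact G.irrefl
  obtain ⟨B, hB, hsubB⟩ := exists_indDom {p, z} hind
  have hpB : p ∈ B := hsubB (Finset.mem_insert_self _ _)
  have hzB : z ∈ B := hsubB (by simp)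
  have hcB : c ∉ B := indDom_mem_not_adj hB hpB h1.symm
  exact hB.1 q (hb B hB hcB q h2) z hzB hz

end FDaux2

namespace FDaux2
set_option linter.unusedSectionVars false
open FDaux
variable {V : Type*} [Fintype V] [DecidableEq V] {G : SimpleGraph V}

lemma forall_mem_four {α : Type*} {P : α → Prop} {a b c d : α} (ha : P a) (hb : P b)
    (hc : P c) (hd : P d) : ∀ D ∈ ({a, b, c, d} : Multiset α), P D := by
  intro D hD
  rcases Multiset.mem_cons.mp hD with rfl | hD
  · exact ha
  rcases Multiset.mem_cons.mp hD with rfl | hD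
  · exact hb
  rcases Multiset.mem_cons.mp hD with rfl | hD
  · exact hc
  rw [Multiset.mem_singleton] at hD
  exact hD ▸ hd

lemma slack_main (hconn : G.Connected) (hdeg : ∀ v : V, 2 ≤ (G.neighborSet v).ncard)
    (hC4 : ¬ Nonempty (G ≃g cycleGraph 4)) (v : V) : Slack G v := by
  classical
  by_cases hv : Good G v
  · exact slack_of_good hdeg hv
  obtain ⟨x, x', hvx, hvx', hxx'⟩ := two_nbrs hdeg v
  by_cases hx : Good G x
  · exact slack_of_good_nbr hdeg hvx hx
  -- both `v` and `x` are bad: the graph is complete bipartite on N(x), N(v)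
  have hxv : G.Adj x v := hvx.symm
  have hSw : ∀ a, G.Adj x a → ∀ z, (G.Adj a z ↔ G.Adj v z) := by
    intro a ha z
    by_cases hav : a = v
    · subst hav; exact Iff.rfl
    · constructor
      · intro h; exact bad_adj_of_adj hx hxv ha (fun h' => hav h'.symm) h
      · intro h; exact bad_adj_of_adj hx ha hxv hav h
  have hTu : ∀ a, G.Adj v a → ∀ z, (G.Adj a z ↔ G.Adj x z) := by
    intro a ha z
    by_cases hax : a = x
    · subst hax; exact Iff.rfl
    · constructor
      · intro h; exact bad_adj_of_adj hv hvx ha (fun h' => hax h'.symm) h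
      · intro h; exact bad_adj_of_adj hv ha hvx hax h
  have hdisj : ∀ a, G.Adj x a → G.Adj v a → False :=
    fun a h1 h2 => G.loopless.irrefl a ((hSw a h1 a).mpr h2)
  have hstep : ∀ a b, (G.Adj x a ∨ G.Adj v a) → G.Adj a b → (G.Adj x b ∨ G.Adj v b) := by
    rintro a b (h | h) hab
    · exact Or.inr ((hSw a h b).mp hab)
    · exact Or.inl ((hTu a h b).mp hab)
  have hcover : ∀ a, G.Adj x a ∨ G.Adj v a := by
    intro a
    have hw : ∀ (c : V) (p : G.Walk c a), (G.Adj x c ∨ G.Adj v c) → (G.Adj x a ∨ G.Adj v a) := by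
      intro c p
      induction p with
      | nil => exact id
      | cons h p ih => intro hc; exact ih (hstep _ _ hc h)
    exact hw v ((hconn v a).some) (Or.inl hxv)
  have hdompair : ∀ a b : V, G.Adj x a → G.Adj v b → Dominating G ({a, b} : Finset V) := by
    intro a b ha hb u _
    rcases hcover u with h | h
    · exact ⟨b, by simp, (hSw u h b).mpr hb⟩
    · exact ⟨a, by simp, (hTu u h a).mpr ha⟩
  by_cases hbyS : ∃ s₁ s₂, G.Adj x s₁ ∧ G.Adj x s₂ ∧ s₁ ≠ v ∧ s₂ ≠ v ∧ s₁ ≠ s₂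
  · -- two non-`v` vertices on the `S` side: four crossing pairs
    obtain ⟨s₁, s₂, hs1, hs2, hs1v, hs2v, hs12⟩ := hbyS
    obtain ⟨t₁, t₂, ht1, ht2, ht12⟩ := two_nbrs hdeg v
    have hs1t1 : s₁ ≠ t₁ := by rintro rfl; exact hdisj s₁ hs1 ht1
    have hs1t2 : s₁ ≠ t₂ := by rintro rfl; exact hdisj s₁ hs1 ht2
    have hs2t1 : s₂ ≠ t₁ := by rintro rfl; exact hdisj s₂ hs2 ht1
    have hs2t2 : s₂ ≠ t₂ := by rintro rfl; exact hdisj s₂ hs2 ht2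
    have hvt1 : v ≠ t₁ := by rintro rfl; exact G.loopless.irrefl v ht1
    have hvt2 : v ≠ t₂ := by rintro rfl; exact G.loopless.irrefl v ht2
    have hvs1 : v ≠ s₁ := Ne.symm hs1v
    have hvs2 : v ≠ s₂ := Ne.symm hs2v
    refine ⟨{({s₁, t₁} : Finset V), {s₂, t₂}, {s₁, t₂}, {s₂, t₁}}, rfl,
      forall_mem_four (hdompair _ _ hs1 ht1) (hdompair _ _ hs2 ht2)
        (hdompair _ _ hs1 ht2) (hdompair _ _ hs2 ht1), ?_, ?_⟩
    · intro u
      rw [count4]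
      simp only [Finset.mem_insert, Finset.mem_singleton]
      by_cases h1 : u = s₁
      · subst h1; simp [hs12, hs1t1, hs1t2]
      by_cases h2 : u = s₂
      · subst h2; simp [Ne.symm hs12, hs2t1, hs2t2]
      by_cases h3 : u = t₁
      · subst h3; simp [Ne.symm hs1t1, Ne.symm hs2t1, ht12]
      by_cases h4 : u = t₂
      · subst h4; simp [Ne.symm hs1t2, Ne.symm hs2t2, Ne.symm ht12]
      · simp [h1, h2, h3, h4]
    · rw [count4]
      simp only [Finset.mem_insert, Finset.mem_singleton]
      simp [hvs1, hvs2, hvt1, hvt2]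
  by_cases hbyT : ∃ t₁ t₂ t₃, G.Adj v t₁ ∧ G.Adj v t₂ ∧ G.Adj v t₃ ∧ t₁ ≠ t₂ ∧ t₁ ≠ t₃ ∧ t₂ ≠ t₃
  · -- three vertices on the `T` side
    obtain ⟨t₁, t₂, t₃, ht1, ht2, ht3, ht12, ht13, ht23⟩ := hbyT
    obtain ⟨s, hs, hsv⟩ := nbr_ne hdeg x v
    set Tf : Finset V := Finset.univ.filter (fun u => G.Adj v u) with hTf
    have hmemTf : ∀ u, u ∈ Tf ↔ G.Adj v u := by
      intro u; simp [hTf]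
    have hst1 : s ≠ t₁ := by rintro rfl; exact hdisj s hs ht1
    have hst2 : s ≠ t₂ := by rintro rfl; exact hdisj s hs ht2
    have hst3 : s ≠ t₃ := by rintro rfl; exact hdisj s hs ht3
    have hvt1 : v ≠ t₁ := by rintro rfl; exact G.loopless.irrefl v ht1
    have hvt2 : v ≠ t₂ := by rintro rfl; exact G.loopless.irrefl v ht2
    have hvt3 : v ≠ t₃ := by rintro rfl; exact G.loopless.irrefl v ht3
    have hnvs : ¬ G.Adj v s := fun h => hdisj s hs h
    have hdomT : Dominating G Tf := by
      intro u hu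
      rcases hcover u with h | h
      · exact ⟨t₁, (hmemTf t₁).mpr ht1, (hSw u h t₁).mpr ht1⟩
      · exact absurd ((hmemTf u).mpr h) hu
    refine ⟨{({s, t₁} : Finset V), {s, t₂}, {v, t₃}, Tf}, rfl,
      forall_mem_four (hdompair _ _ hs ht1) (hdompair _ _ hs ht2)
        (hdompair _ _ hxv ht3) hdomT, ?_, ?_⟩
    · intro u
      rw [count4]
      simp only [Finset.mem_insert, Finset.mem_singleton, hmemTf]
      by_cases h1 : u = s
      · subst h1; simp [hsv, hst3, hnvs]
      by_cases h2 : u = v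
      · simp [h2, Ne.symm hsv, hvt1, hvt2, G.loopless.irrefl v]
      by_cases h3 : u = t₁
      · subst h3; simp [Ne.symm hst1, ht12, Ne.symm hvt1, ht13, ht1]
      by_cases h4 : u = t₂
      · subst h4; simp [Ne.symm hst2, Ne.symm ht12, Ne.symm hvt2, ht23, ht2]
      by_cases h5 : u = t₃
      · subst h5; simp [Ne.symm hst3, Ne.symm ht13, Ne.symm ht23, ht3]
      by_cases h6 : G.Adj v u
      · simp [h1, h2, h3, h4, h5, h6]
      · simp [h1, h2, h3, h4, h5, h6]
    · rw [count4]
      simp only [Finset.mem_insert, Finset.mem_singleton, hmemTf]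
      simp [Ne.symm hsv, hvt1, hvt2, G.loopless.irrefl v]
  · -- degenerate case: `G` is a 4-cycle, contradiction
    obtain ⟨s₀, hs0, hs0v⟩ := nbr_ne hdeg x v
    obtain ⟨t, hvt, htx⟩ : ∃ t, G.Adj v t ∧ t ≠ x := by
      obtain ⟨t₁, t₂, h1, h2, h12⟩ := two_nbrs hdeg v
      by_cases h : t₁ = x
      · exact ⟨t₂, h2, by rintro rfl; exact h12 h⟩
      · exact ⟨t₁, h1, h⟩
    have hSsub : ∀ u, G.Adj x u → u = v ∨ u = s₀ := by
      intro u hu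
      by_contra hcon
      push_neg at hcon
      exact hbyS ⟨u, s₀, hu, hs0, hcon.1, hs0v, hcon.2⟩
    have hTsub : ∀ u, G.Adj v u → u = x ∨ u = t := by
      intro u hu
      by_contra hcon
      push_neg at hcon
      exact hbyT ⟨u, x, t, hu, hvx, hvt, hcon.1, hcon.2, fun h => htx h.symm⟩
    have cover4 : ∀ u, u = v ∨ u = x ∨ u = s₀ ∨ u = t := by
      intro u
      rcases hcover u with h | h
      · rcases hSsub u h with h' | h'
        · exact Or.inl h'
        · exact Or.inr (Or.inr (Or.inl h'))
      · rcases hTsub u h with h' | h'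
        · exact Or.inr (Or.inl h')
        · exact Or.inr (Or.inr (Or.inr h'))
    have hst : G.Adj s₀ t := (hSw s₀ hs0 t).mpr hvt
    have hnvs0 : ¬ G.Adj v s₀ := fun h => hdisj s₀ hs0 h
    have hnxt : ¬ G.Adj x t := fun h => hdisj t h hvt
    have hnsv0 : ¬ G.Adj s₀ v := fun h => hnvs0 h.symm
    have hntx : ¬ G.Adj t x := fun h => hnxt h.symm
    have hvx' : v ≠ x := G.ne_of_adj hvx
    have hvt' : v ≠ t := G.ne_of_adj hvt
    have hxs0' : x ≠ s₀ := G.ne_of_adj hs0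
    have hs0t : s₀ ≠ t := G.ne_of_adj hst
    have hvs0 : v ≠ s₀ := Ne.symm hs0v
    have hxt : x ≠ t := fun h => htx h.symm
    have hnvv : ¬ G.Adj v v := G.loopless.irrefl v
    have hnxx : ¬ G.Adj x x := G.loopless.irrefl x
    have hnss : ¬ G.Adj s₀ s₀ := G.loopless.irrefl s₀
    have hntt : ¬ G.Adj t t := G.loopless.irrefl t
    have hc : ∀ i j : Fin 4, (cycleGraph 4).Adj i j ↔
        ((i = 0 ∧ j = 1) ∨ (i = 1 ∧ j = 0) ∨ (i = 1 ∧ j = 2) ∨ (i = 2 ∧ j = 1) ∨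
         (i = 2 ∧ j = 3) ∨ (i = 3 ∧ j = 2) ∨ (i = 3 ∧ j = 0) ∨ (i = 0 ∧ j = 3)) := by
      decide
    have hiso : Nonempty (G ≃g cycleGraph 4) := by
      refine ⟨⟨⟨fun u => if u = v then 0 else if u = x then 1 else if u = s₀ then 2 else 3,
        fun i => if i = 0 then v else if i = 1 then x else if i = 2 then s₀ else t,
        ?_, ?_⟩, ?_⟩⟩
      · intro u
        rcases cover4 u with rfl | rfl | rfl | rfl <;>
          simp [Ne.symm hvx', Ne.symm hvs0, Ne.symm hvt', Ne.symm hxs0', htx, Ne.symm hs0t]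
      · intro i
        fin_cases i <;>
          simp [Ne.symm hvx', Ne.symm hvs0, Ne.symm hvt', Ne.symm hxs0', htx, Ne.symm hs0t]
      · intro a b
        simp only [Equiv.coe_fn_mk]
        rcases cover4 a with rfl | rfl | rfl | rfl <;>
          rcases cover4 b with rfl | rfl | rfl | rfl <;>
          simp [hc, Ne.symm hvx', Ne.symm hvs0, Ne.symm hvt', Ne.symm hxs0', htx, Ne.symm hs0t,
            hvx, hxv, hvt, hvt.symm, hs0, hs0.symm, hst, hst.symm,
            hnvs0, hnsv0, hnxt, hntx, hnvv, hnxx, hnss, hntt]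
    exact (hC4 hiso).elim

end FDaux2

namespace FDaux2
set_option linter.unusedSectionVars false
open FDaux
variable {V : Type*} [Fintype V] [DecidableEq V] {G : SimpleGraph V}

lemma countP_bind {β : Type*} (m : Multiset β) (f : β → Multiset (Finset V))
    (p : Finset V → Prop) [DecidablePred p] :
    Multiset.countP p (m.bind f) = (m.map fun a => Multiset.countP p (f a)).sum := by
  induction m using Multiset.induction with
  | empty => simp
  | cons a s ih => simp [Multiset.cons_bind, Multiset.countP_add, ih]

lemma sum_card_eq (𝒟 : Multiset (Finset V)) :
    (𝒟.map Finset.card).sum = ∑ u : V, Multiset.countP (fun D => u ∈ D) 𝒟 := by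
  classical
  induction 𝒟 using Multiset.induction with
  | empty => simp
  | cons D s ih =>
    simp only [Multiset.map_cons, Multiset.sum_cons, Multiset.countP_cons, ih]
    rw [Finset.sum_add_distrib]
    have hD : ∑ u : V, (if u ∈ D then 1 else 0) = D.card := by
      rw [Finset.sum_ite_mem, Finset.univ_inter, Finset.card_eq_sum_ones]
    omega

lemma card_le_sum' (m : Multiset ℕ) (h : ∀ x ∈ m, 1 ≤ x) : Multiset.card m ≤ m.sum := by
  induction m using Multiset.induction with
  | empty => simp
  | cons a s ih =>
    simp only [Multiset.card_cons, Multiset.sum_cons]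
    have h1 := h a (Multiset.mem_cons_self a s)
    have h2 := ih (fun x hx => h x (Multiset.mem_cons_of_mem hx))
    omega

end FDaux2


/-- A finite connected graph with minimum degree at least 2 that is not isomorphic to
the 4-cycle has fractional domatic number strictly greater than 2. -/
theorem stmt_1 {V : Type*} [Fintype V] [DecidableEq V] (G : SimpleGraph V)
    (hconn : G.Connected) (hdeg : ∀ v : V, 2 ≤ (G.neighborSet v).ncard)
    (hC4 : ¬ Nonempty (G ≃g cycleGraph 4)) :
    2 < fracDomatic G := by
  classical
  have hne : Nonempty V := hconn.nonempty
  have hn1 : 1 ≤ Fintype.card V := Fintype.card_pos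
  set n := Fintype.card V with hn
  have hslack := fun v => FDaux2.slack_main hconn hdeg hC4 v
  choose 𝒟v hcard4 hdomv hcnt2 hslk1 using hslack
  set 𝒟 : Multiset (Finset V) := Multiset.bind Finset.univ.val 𝒟v with h𝒟
  have hcard : Multiset.card 𝒟 = 4 * n := by
    rw [h𝒟, Multiset.card_bind]
    have he : Multiset.map (Multiset.card ∘ 𝒟v) Finset.univ.val
        = Multiset.map (fun _ => 4) Finset.univ.val :=
      Multiset.map_congr rfl (fun a _ => hcard4 a)
    rw [he, Multiset.map_const', Multiset.sum_replicate, smul_eq_mul]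
    have : Multiset.card (Finset.univ : Finset V).val = n := by rw [hn]; rfl
    rw [this, mul_comm]
  have hdomD : ∀ D ∈ 𝒟, Dominating G D := by
    intro D hD
    rw [h𝒟, Multiset.mem_bind] at hD
    obtain ⟨a, _, ha⟩ := hD
    exact hdomv a D ha
  have hcnt : ∀ u : V, Multiset.countP (fun D => u ∈ D) 𝒟 ≤ 2 * n - 1 := by
    intro u
    rw [h𝒟, FDaux2.countP_bind]
    have heq : (Multiset.map (fun a => Multiset.countP (fun D => u ∈ D) (𝒟v a))
        Finset.univ.val).sum = ∑ a : V, Multiset.countP (fun D => u ∈ D) (𝒟v a) := rfl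
    rw [heq, ← Finset.add_sum_erase Finset.univ
      (fun a => Multiset.countP (fun D => u ∈ D) (𝒟v a)) (Finset.mem_univ u)]
    have h1 : Multiset.countP (fun D => u ∈ D) (𝒟v u) ≤ 1 := hslk1 u
    have h2 : ∑ a ∈ Finset.univ.erase u, Multiset.countP (fun D => u ∈ D) (𝒟v a)
        ≤ (Finset.univ.erase u).card • 2 :=
      Finset.sum_le_card_nsmul _ _ _ (fun a _ => hcnt2 a u)
    have hcarde : (Finset.univ.erase u).card = n - 1 := by
      rw [Finset.card_erase_of_mem (Finset.mem_univ u), Finset.card_univ]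
    rw [hcarde, smul_eq_mul] at h2
    omega
  have hconfig : IsConfig G 𝒟 (4 * n) (2 * n - 1) := ⟨hcard, hdomD, hcnt⟩
  have hmem : ((4 * n : ℕ) : ℝ) / ((2 * n - 1 : ℕ) : ℝ) ∈
      {x : ℝ | ∃ k s : ℕ, 0 < s ∧ (∃ 𝒟 : Multiset (Finset V), IsConfig G 𝒟 k s) ∧
        x = (k : ℝ) / (s : ℝ)} :=
    ⟨4 * n, 2 * n - 1, by omega, ⟨𝒟, hconfig⟩, rfl⟩
  have hbdd : BddAbove {x : ℝ | ∃ k s : ℕ, 0 < s ∧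
      (∃ 𝒟 : Multiset (Finset V), IsConfig G 𝒟 k s) ∧ x = (k : ℝ) / (s : ℝ)} := by
    refine ⟨(n : ℝ), ?_⟩
    rintro y ⟨k, s, hs, ⟨𝒟', hD1, hD2, hD3⟩, rfl⟩
    have hk : k ≤ n * s := by
      have hne1 : ∀ D ∈ 𝒟', 1 ≤ D.card := by
        intro D hD
        obtain ⟨w⟩ := hne
        by_cases hw : w ∈ D
        · exact Finset.card_pos.mpr ⟨w, hw⟩
        · obtain ⟨z, hz, _⟩ := hD2 D hD w hw
          exact Finset.card_pos.mpr ⟨z, hz⟩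
      have h1 : Multiset.card 𝒟' ≤ (𝒟'.map Finset.card).sum := by
        have h := FDaux2.card_le_sum' (𝒟'.map Finset.card) ?_
        · rwa [Multiset.card_map] at h
        · intro y hy
          rw [Multiset.mem_map] at hy
          obtain ⟨D, hD, rfl⟩ := hy
          exact hne1 D hD
      have h2 := FDaux2.sum_card_eq 𝒟'
      have h3 : ∑ u : V, Multiset.countP (fun D => u ∈ D) 𝒟' ≤ n * s := by
        calc ∑ u : V, Multiset.countP (fun D => u ∈ D) 𝒟'
            ≤ ∑ _u : V, s := Finset.sum_le_sum (fun u _ => hD3 u)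
          _ = n * s := by rw [Finset.sum_const, Finset.card_univ, smul_eq_mul]
      omega
    have hs' : (0 : ℝ) < (s : ℝ) := by exact_mod_cast hs
    rw [div_le_iff₀ hs']
    calc (k : ℝ) ≤ ((n * s : ℕ) : ℝ) := by exact_mod_cast hk
      _ = (n : ℝ) * (s : ℝ) := by push_cast; ring
  have hlt : (2 : ℝ) < ((4 * n : ℕ) : ℝ) / ((2 * n - 1 : ℕ) : ℝ) := by
    have hposn : 0 < 2 * n - 1 := by omega
    have hpos : (0 : ℝ) < ((2 * n - 1 : ℕ) : ℝ) := by exact_mod_cast hposn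
    rw [lt_div_iff₀ hpos]
    have hcast : ((2 * n - 1 : ℕ) : ℝ) = 2 * (n : ℝ) - 1 := by
      rw [Nat.cast_sub (by omega : 1 ≤ 2 * n)]
      push_cast
      ring
    rw [hcast]
    have : (1 : ℝ) ≤ (n : ℝ) := by exact_mod_cast hn1
    push_cast
    linarith
  exact lt_of_lt_of_le hlt (le_csSup hbdd hmem)
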